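/- Let I + S be a packing of ℝ^d by unit cubes with I + u ⊆ ⋃(I + S) and u ∉ S. Let S' = {s ∈ S : (I + s) ∩ (I + u) ≠ ∅} and for s ∈ S' let ⟨s⟩ = {i ∈ [d] : s_i ≠ u_i}. Then for every t ∈ S' such that ⟨t⟩ is maximal under inclusion among {⟨s⟩ : s ∈ S'}, there exists t' ∈ S' with ⟨t'⟩ = ⟨t⟩, t - t' ∈ {-1,0,1}^d, and |{i : |t_i - t'_i| = 1}| odd. -/

import Mathlib

/-- The translate of the half-open unit cube `[0,1)^d` by `t`. -/
def cube {d : ℕ} (t : Fin d → ℝ) : Set (Fin d → ℝ) :=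
  {x | ∀ i, t i ≤ x i ∧ x i < t i + 1}

open Finset

/-- The "target" vector for the partner cube: coordinates in `K` are shifted by `±1`
towards the other side of `u`, coordinates in `T \ K` agree with `t`, and coordinates
outside `T` agree with `u`. -/
noncomputable def tgt {d : ℕ} (t u : Fin d → ℝ) (T K : Finset (Fin d)) (i : Fin d) : ℝ :=
  if i ∈ T then (if i ∈ K then (if u i < t i then t i - 1 else t i + 1) else t i) else u i

lemma cube_inter_nonempty {d : ℕ} (a b : Fin d → ℝ)
    (h1 : ∀ i, a i < b i + 1) (h2 : ∀ i, b i < a i + 1) :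
    (cube a ∩ cube b).Nonempty := by
  refine ⟨fun i => max (a i) (b i), fun i => ⟨le_max_left _ _, ?_⟩,
    fun i => ⟨le_max_right _ _, ?_⟩⟩
  · exact max_lt (lt_add_of_pos_right _ one_pos) (h2 i)
  · exact max_lt (h1 i) (lt_add_of_pos_right _ one_pos)

lemma main_step {d : ℕ} (S : Set (Fin d → ℝ))
    (hpack : ∀ s ∈ S, ∀ s' ∈ S, s ≠ s' → Disjoint (cube s) (cube s'))
    (u t : Fin d → ℝ) (ht : t ∈ S)
    (hcover : cube u ⊆ ⋃ s ∈ S, cube s)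
    (T : Finset (Fin d)) (hT : ∀ i, i ∈ T ↔ t i ≠ u i) (hTne : T.Nonempty)
    (htu : ∀ i, u i - 1 < t i ∧ t i < u i + 1)
    (hmax' : ∀ s ∈ S, (∀ i, u i - 1 < s i ∧ s i < u i + 1) →
      (∀ i ∈ T, s i ≠ u i) → ∀ i ∉ T, s i = u i)
    (δ : ℝ) (hδ0 : 0 < δ)
    (hδ : ∀ i ∈ T, δ ≤ (if u i < t i then t i - u i else t i + 1 - u i)) :
    ∃ K, K ⊆ T ∧ Odd K.card ∧ ∃ s ∈ S,
      ∀ i, tgt t u T K i - δ < s i ∧ s i ≤ tgt t u T K i := by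
  classical
  set y : Fin d → Bool → ℝ := fun i b =>
    if u i < t i then (if b then t i - δ else t i) else (if b then t i + 1 else t i + 1 - δ)
    with hy
  set x : (Fin d → Bool) → Fin d → ℝ := fun ε i => if i ∈ T then y i (ε i) else u i with hx
  have hyu : ∀ i ∈ T, ∀ b, u i ≤ y i b ∧ y i b < u i + 1 := by
    intro i hi b
    have h1 := (htu i).1
    have h2 := (htu i).2
    have hδi := hδ i hi
    have hne := (hT i).1 hi
    by_cases hc : u i < t i
    · rw [if_pos hc] at hδi
      cases b <;> simp only [hy, if_pos hc, if_true, Bool.false_eq_true, if_false] <;>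
        constructor <;> linarith
    · rw [if_neg hc] at hδi
      have hlt : t i < u i := lt_of_le_of_ne (not_lt.mp hc) hne
      cases b <;> simp only [hy, if_neg hc, if_true, Bool.false_eq_true, if_false] <;>
        constructor <;> linarith
  have hxu : ∀ ε, x ε ∈ cube u := by
    intro ε i
    by_cases hi : i ∈ T
    · simpa [hx, hi] using hyu i hi (ε i)
    · simp [hx, hi]
  have hex : ∀ ε, ∃ s, s ∈ S ∧ x ε ∈ cube s := by
    intro ε
    have := hcover (hxu ε)
    simpa using this
  choose σ hσS hσx using hex
  have huniq : ∀ ε, ∀ s ∈ S, x ε ∈ cube s → σ ε = s := by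
    intro ε s hs hxs
    by_contra hne
    exact Set.disjoint_left.mp (hpack _ (hσS ε) _ hs hne) (hσx ε) hxs
  set sign : (Fin d → Bool) → ℤ := fun ε => ∏ i ∈ T, (if ε i then (-1 : ℤ) else 1) with hsgn
  -- the total signed sum vanishes
  have hsum0 : ∑ ε : Fin d → Bool, sign ε = 0 := by
    have h1 : ∀ ε : Fin d → Bool, sign ε =
        ∏ i : Fin d, (if i ∈ T then (if ε i then (-1 : ℤ) else 1) else 1) := by
      intro ε
      rw [hsgn]
      rw [← Finset.prod_subset (Finset.subset_univ T) (fun i _ hi => if_neg hi)]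
      exact Finset.prod_congr rfl fun i hi => (if_pos hi).symm
    obtain ⟨i₀, hi₀⟩ := hTne
    have h2 := Finset.prod_univ_sum (fun _ : Fin d => (Finset.univ : Finset Bool))
      (fun i b => if i ∈ T then (if b then (-1 : ℤ) else 1) else 1)
    rw [Fintype.piFinset_univ] at h2
    have h3 : (∏ i : Fin d, ∑ b ∈ (Finset.univ : Finset Bool),
        (if i ∈ T then (if b then (-1 : ℤ) else 1) else 1)) = 0 := by
      refine Finset.prod_eq_zero (Finset.mem_univ i₀) ?_
      rw [Fintype.sum_bool]
      simp [hi₀]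
    calc ∑ ε : Fin d → Bool, sign ε
        = ∑ ε : Fin d → Bool, ∏ i : Fin d,
            (if i ∈ T then (if ε i then (-1 : ℤ) else 1) else 1) :=
          Finset.sum_congr rfl fun ε _ => h1 ε
      _ = 0 := by rw [← h2, h3]
  set B := (Finset.univ : Finset (Fin d → Bool)).image σ with hB
  have hgroup : ∑ s ∈ B, ∑ ε ∈ Finset.univ.filter (fun ε => σ ε = s), sign ε
      = ∑ ε : Fin d → Bool, sign ε :=
    Finset.sum_fiberwise_of_maps_to (fun ε _ => Finset.mem_image_of_mem σ (Finset.mem_univ ε)) sign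
  set rig : (Fin d → ℝ) → Prop := fun s => ∀ i ∈ T,
    ¬ ((s i ≤ y i false ∧ y i false < s i + 1) ∧ (s i ≤ y i true ∧ y i true < s i + 1))
    with hrig
  -- non-rigid fibers sum to zero
  have hnon : ∀ s ∈ B, ¬ rig s → ∑ ε ∈ Finset.univ.filter (fun ε => σ ε = s), sign ε = 0 := by
    intro s hsB hs
    have hsS : s ∈ S := by
      obtain ⟨ε', -, rfl⟩ := Finset.mem_image.mp hsB
      exact hσS ε'
    have hs2 : ∃ i ∈ T, ((s i ≤ y i false ∧ y i false < s i + 1) ∧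
        (s i ≤ y i true ∧ y i true < s i + 1)) := by
      by_contra h
      exact hs (fun i hi hb => h ⟨i, hi, hb⟩)
    obtain ⟨i, hiT, hboth⟩ := hs2
    refine Finset.sum_involution (fun ε _ => Function.update ε i (! ε i)) ?_ ?_ ?_ ?_
    · intro ε hε
      have hP : ∀ b : Bool, sign (Function.update ε i b)
          = (if b then (-1:ℤ) else 1) * ∏ j ∈ T.erase i, (if ε j then (-1:ℤ) else 1) := by
        intro b
        have hfun : ∀ j ∈ T, (if Function.update ε i b j then (-1:ℤ) else 1)
            = Function.update (fun j => if ε j then (-1:ℤ) else 1) i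
                (if b then (-1:ℤ) else 1) j := by
          intro j _
          by_cases hj : j = i
          · subst hj; simp
          · simp [Function.update_of_ne hj]
        simp only [hsgn]
        rw [Finset.prod_congr rfl hfun, Finset.prod_update_of_mem hiT, Finset.erase_eq]
      have hsε : sign ε
          = (if ε i then (-1:ℤ) else 1) * ∏ j ∈ T.erase i, (if ε j then (-1:ℤ) else 1) :=
        (Finset.mul_prod_erase T _ hiT).symm
      rw [hsε, hP (! ε i)]
      cases hεi : ε i <;> simp [hεi] <;> ring
    · intro ε hε _
      intro heq
      have := congrFun heq i
      simp at this
    · intro ε hε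
      simp only [Finset.mem_filter, Finset.mem_univ, true_and] at hε ⊢
      refine huniq _ s hsS ?_
      intro j
      by_cases hj : j = i
      · subst hj
        have hxj : x (Function.update ε j (! ε j)) j = y j (! ε j) := by simp [hx, hiT]
        rw [hxj]
        cases hεj : ε j
        · simpa using hboth.2
        · simpa using hboth.1
      · have hxx : x (Function.update ε i (! ε i)) j = x ε j := by
          simp [hx, Function.update_of_ne hj]
        rw [hxx]
        have hc := hσx ε j
        rw [hε] at hc
        exact hc
    · intro ε hε
      funext j
      by_cases hj : j = i
      · subst hj; simp
      · simp [Function.update_of_ne hj]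
  -- the cube t is rigid and appears as a fiber
  set ε₀ : Fin d → Bool := fun _ => false with hε₀
  have hxt : x ε₀ ∈ cube t := by
    intro i
    by_cases hi : i ∈ T
    · have h2 := (htu i).2
      have hδi := hδ i hi
      by_cases hc : u i < t i
      · rw [if_pos hc] at hδi
        simp only [hx, hε₀, hi, if_pos, hy, if_pos hc, Bool.false_eq_true, if_false]
        constructor <;> linarith
      · rw [if_neg hc] at hδi
        simp only [hx, hε₀, hi, if_pos, hy, if_neg hc, Bool.false_eq_true, if_false]
        constructor <;> linarith
    · have hteq : t i = u i := by
        by_contra hne; exact hi ((hT i).2 hne)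
      simp only [hx, hε₀, hi, if_neg, if_false, hteq]
      constructor
      · exact le_refl _
      · linarith
  have hσt : σ ε₀ = t := huniq ε₀ t ht hxt
  have htrig : rig t := by
    intro i hi hb
    have hδi := hδ i hi
    by_cases hc : u i < t i
    · rw [if_pos hc] at hδi
      have hcon := hb.2.1
      simp only [hy, if_pos hc, if_true] at hcon
      linarith
    · rw [if_neg hc] at hδi
      have hcon := hb.2.2
      simp only [hy, if_neg hc, if_true] at hcon
      linarith
  -- signs and parities
  have hsgncard : ∀ ε : Fin d → Bool,
      sign ε = (-1 : ℤ) ^ ((T.filter (fun i => ε i = true)).card) := by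
    intro ε
    simp only [hsgn]
    rw [Finset.prod_ite (fun _ => (-1 : ℤ)) (fun _ => (1 : ℤ))]
    simp
  have key : ∃ ε : Fin d → Bool, rig (σ ε) ∧
      ¬ Even ((T.filter (fun i => ε i = true)).card) := by
    by_contra H
    push_neg at H
    have hsign1 : ∀ ε : Fin d → Bool, rig (σ ε) → sign ε = 1 := by
      intro ε hε
      rw [hsgncard ε]
      exact (H ε hε).neg_one_pow
    have hfib : ∀ s ∈ B, 0 ≤ ∑ ε ∈ Finset.univ.filter (fun ε => σ ε = s), sign ε := by
      intro s hsB
      by_cases hr : rig s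
      · refine Finset.sum_nonneg ?_
        intro ε hε
        rw [Finset.mem_filter] at hε
        rw [hsign1 ε (by rw [hε.2]; exact hr)]
        norm_num
      · rw [hnon s hsB hr]
    have htB : t ∈ B := hσt ▸ Finset.mem_image_of_mem σ (Finset.mem_univ ε₀)
    have htpos : 0 < ∑ ε ∈ Finset.univ.filter (fun ε => σ ε = t), sign ε := by
      refine Finset.sum_pos' ?_ ⟨ε₀, ?_, ?_⟩
      · intro ε hε
        rw [Finset.mem_filter] at hε
        rw [hsign1 ε (by rw [hε.2]; exact htrig)]
        norm_num
      · simp [hσt]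
      · rw [hsign1 ε₀ (by rw [hσt]; exact htrig)]
        norm_num
    have hpos : 0 < ∑ s ∈ B, ∑ ε ∈ Finset.univ.filter (fun ε => σ ε = s), sign ε :=
      Finset.sum_pos' hfib ⟨t, htB, htpos⟩
    rw [hgroup, hsum0] at hpos
    exact lt_irrefl 0 hpos
  obtain ⟨ε, hrigσ, hodd⟩ := key
  rw [Nat.not_even_iff_odd] at hodd
  refine ⟨T.filter (fun i => ε i = true), Finset.filter_subset _ _, hodd, σ ε, hσS ε, ?_⟩
  have hsb : ∀ i, u i - 1 < σ ε i ∧ σ ε i < u i + 1 := by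
    intro i
    have h1 := hσx ε i
    have h2 := hxu ε i
    exact ⟨by linarith [h1.2, h2.1], by linarith [h1.1, h2.2]⟩
  have hsneT : ∀ i ∈ T, σ ε i ≠ u i := by
    intro i hi heq
    refine hrigσ i hi ?_
    refine ⟨⟨?_, ?_⟩, ?_, ?_⟩
    · rw [heq]; exact (hyu i hi false).1
    · rw [heq]; linarith [(hyu i hi false).2]
    · rw [heq]; exact (hyu i hi true).1
    · rw [heq]; linarith [(hyu i hi true).2]
  have hout : ∀ i ∉ T, σ ε i = u i := hmax' _ (hσS ε) hsb hsneT
  intro i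
  by_cases hiT : i ∈ T
  · have hcov : σ ε i ≤ y i (ε i) ∧ y i (ε i) < σ ε i + 1 := by
      have := hσx ε i
      simpa [hx, hiT] using this
    have hncov : ¬ (σ ε i ≤ y i (! ε i) ∧ y i (! ε i) < σ ε i + 1) := by
      intro hcon
      refine hrigσ i hiT ?_
      cases hεi : ε i
      · rw [hεi] at hcov hcon
        exact ⟨hcov, by simpa using hcon⟩
      · rw [hεi] at hcov hcon
        exact ⟨by simpa using hcon, hcov⟩
    have hδi := hδ i hiT
    by_cases hc : u i < t i
    · rw [if_pos hc] at hδi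
      cases hεi : ε i
      · rw [hεi] at hcov hncov
        simp only [hy, if_pos hc, Bool.false_eq_true, if_false, Bool.not_false, if_true]
          at hcov hncov
        have hKi : i ∉ T.filter (fun i => ε i = true) := by simp [hεi]
        simp only [tgt, if_pos hiT, if_neg hKi]
        rcases not_and_or.mp hncov with h | h
        · rw [not_le] at h
          constructor <;> linarith [hcov.1, hcov.2]
        · rw [not_lt] at h
          constructor <;> linarith [hcov.1, hcov.2]
      · rw [hεi] at hcov hncov
        simp only [hy, if_pos hc, if_true, Bool.not_true, Bool.false_eq_true, if_false]
          at hcov hncov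
        have hKi : i ∈ T.filter (fun i => ε i = true) := by simp [hεi, hiT]
        simp only [tgt, if_pos hiT, if_pos hKi, if_pos hc]
        rcases not_and_or.mp hncov with h | h
        · rw [not_le] at h
          constructor <;> linarith [hcov.1, hcov.2]
        · rw [not_lt] at h
          constructor <;> linarith [hcov.1, hcov.2]
    · rw [if_neg hc] at hδi
      cases hεi : ε i
      · rw [hεi] at hcov hncov
        simp only [hy, if_neg hc, Bool.false_eq_true, if_false, Bool.not_false, if_true]
          at hcov hncov
        have hKi : i ∉ T.filter (fun i => ε i = true) := by simp [hεi]
        simp only [tgt, if_pos hiT, if_neg hKi]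
        rcases not_and_or.mp hncov with h | h
        · rw [not_le] at h
          constructor <;> linarith [hcov.1, hcov.2]
        · rw [not_lt] at h
          constructor <;> linarith [hcov.1, hcov.2]
      · rw [hεi] at hcov hncov
        simp only [hy, if_neg hc, if_true, Bool.not_true, Bool.false_eq_true, if_false]
          at hcov hncov
        have hKi : i ∈ T.filter (fun i => ε i = true) := by simp [hεi, hiT]
        simp only [tgt, if_pos hiT, if_pos hKi, if_neg hc]
        rcases not_and_or.mp hncov with h | h
        · rw [not_le] at h
          constructor <;> linarith [hcov.1, hcov.2]
        · rw [not_lt] at h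
          constructor <;> linarith [hcov.1, hcov.2]
  · have heq := hout i hiT
    simp only [tgt, if_neg hiT]
    rw [heq]
    constructor
    · linarith
    · exact le_refl _

theorem stmt_5 {d : ℕ} (S : Set (Fin d → ℝ))
    (hpack : ∀ s ∈ S, ∀ s' ∈ S, s ≠ s' → Disjoint (cube s) (cube s'))
    (u : Fin d → ℝ) (hu : u ∉ S)
    (hcover : cube u ⊆ ⋃ s ∈ S, cube s)
    (S' : Set (Fin d → ℝ)) (hS' : S' = {s ∈ S | (cube s ∩ cube u).Nonempty})
    (supp : (Fin d → ℝ) → Finset (Fin d))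
    (hsupp : ∀ s, supp s = Finset.univ.filter (fun i => s i ≠ u i))
    (t : Fin d → ℝ) (ht : t ∈ S')
    (hmax : ∀ s ∈ S', supp t ⊆ supp s → supp s = supp t) :
    ∃ t' ∈ S', supp t' = supp t ∧ (∀ i, t i - t' i ∈ ({-1, 0, 1} : Set ℝ)) ∧
      Odd (Finset.univ.filter (fun i => |t i - t' i| = 1)).card := by
  classical
  have htS : t ∈ S := by rw [hS'] at ht; exact ht.1
  have htcube : (cube t ∩ cube u).Nonempty := by rw [hS'] at ht; exact ht.2
  obtain ⟨z, hzt, hzu⟩ := htcube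
  have htu : ∀ i, u i - 1 < t i ∧ t i < u i + 1 := by
    intro i
    have h1 := hzt i
    have h2 := hzu i
    exact ⟨by linarith [h1.2, h2.1], by linarith [h1.1, h2.2]⟩
  set T := supp t with hTdef
  have hT : ∀ i, i ∈ T ↔ t i ≠ u i := by
    intro i
    rw [hTdef, hsupp]
    simp
  have hTne : T.Nonempty := by
    have hne : t ≠ u := fun h => hu (h ▸ htS)
    obtain ⟨i, hi⟩ := Function.ne_iff.mp hne
    exact ⟨i, (hT i).2 hi⟩
  have hmax' : ∀ s ∈ S, (∀ i, u i - 1 < s i ∧ s i < u i + 1) →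
      (∀ i ∈ T, s i ≠ u i) → ∀ i ∉ T, s i = u i := by
    intro s hs hb hne i hi
    have hsS' : s ∈ S' := by
      rw [hS']
      exact ⟨hs, cube_inter_nonempty s u (fun j => (hb j).2)
        (fun j => by linarith [(hb j).1])⟩
    have hsub : supp t ⊆ supp s := by
      intro j hj
      rw [hsupp]
      simp only [Finset.mem_filter, Finset.mem_univ, true_and]
      exact hne j hj
    have heq := hmax s hsS' hsub
    by_contra hnei
    have hmem : i ∈ supp s := by
      rw [hsupp]
      simp [hnei]
    rw [heq] at hmem
    exact hi hmem
  set m : Fin d → ℝ := fun i => if u i < t i then t i - u i else t i + 1 - u i with hm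
  set δ₀ := T.inf' hTne m with hδ₀def
  have hmpos : ∀ i ∈ T, 0 < m i := by
    intro i hi
    have hne := (hT i).1 hi
    simp only [hm]
    by_cases hc : u i < t i
    · rw [if_pos hc]; linarith
    · rw [if_neg hc]; linarith [(htu i).1]
  have hδ₀pos : 0 < δ₀ := by
    rw [hδ₀def]
    exact (Finset.lt_inf'_iff hTne).mpr hmpos
  have hδ₀lt1 : δ₀ < 1 := by
    obtain ⟨i₀, hi₀⟩ := hTne
    have hle : δ₀ ≤ m i₀ := Finset.inf'_le _ hi₀
    have hlt : m i₀ < 1 := by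
      have hne := (hT i₀).1 hi₀
      simp only [hm]
      by_cases hc : u i₀ < t i₀
      · rw [if_pos hc]; linarith [(htu i₀).2]
      · rw [if_neg hc]
        have h' : t i₀ < u i₀ := lt_of_le_of_ne (not_lt.mp hc) hne
        linarith
    linarith
  have hstep : ∀ n : ℕ, ∃ p : Finset (Fin d) × (Fin d → ℝ), p.1 ⊆ T ∧ Odd p.1.card ∧
      p.2 ∈ S ∧ ∀ i, tgt t u T p.1 i - δ₀ / (n + 1) < p.2 i ∧ p.2 i ≤ tgt t u T p.1 i := by
    intro n
    have hpos : 0 < δ₀ / ((n : ℝ) + 1) := by positivity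
    have hle : ∀ i ∈ T, δ₀ / ((n : ℝ) + 1) ≤
        (if u i < t i then t i - u i else t i + 1 - u i) := by
      intro i hi
      have h1 : δ₀ / ((n : ℝ) + 1) ≤ δ₀ := by
        apply div_le_self hδ₀pos.le
        have : (0 : ℝ) ≤ n := Nat.cast_nonneg n
        linarith
      have h2 : δ₀ ≤ m i := Finset.inf'_le _ hi
      simp only [hm] at h2
      linarith
    obtain ⟨K, hK1, hK2, s, hsS, hb⟩ :=
      main_step S hpack u t htS hcover T hT hTne htu hmax' _ hpos hle
    exact ⟨(K, s), hK1, hK2, hsS, hb⟩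
  choose P hP1 hP2 hP3 hP4 using hstep
  obtain ⟨K, hKinfC⟩ := Finite.exists_infinite_fiber (fun n => (P n).1)
  have hKinf : {n : ℕ | (P n).1 = K}.Infinite := by
    rw [← Set.infinite_coe_iff]
    convert hKinfC using 2
    ext n; simp
  obtain ⟨n₀, hn₀⟩ := hKinf.nonempty
  simp only [Set.mem_setOf_eq] at hn₀
  set t' := (P n₀).2 with ht'def
  have hKT : K ⊆ T := hn₀ ▸ hP1 n₀
  have hKodd : Odd K.card := hn₀ ▸ hP2 n₀
  have hdiv_le : ∀ n : ℕ, δ₀ / ((n : ℝ) + 1) ≤ δ₀ := by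
    intro n
    apply div_le_self hδ₀pos.le
    have : (0 : ℝ) ≤ n := Nat.cast_nonneg n
    linarith
  have hconst : ∀ n, (P n).1 = K → (P n).2 = t' := by
    intro n hn
    by_contra hne
    have hdisj := hpack _ (hP3 n) _ (hP3 n₀) hne
    have hb : ∀ i, (P n).2 i < t' i + 1 ∧ t' i < (P n).2 i + 1 := by
      intro i
      have e1 := hP4 n i
      have e2 := hP4 n₀ i
      rw [hn] at e1
      rw [hn₀] at e2
      have d1 := hdiv_le n
      have d2 := hdiv_le n₀
      constructor <;> linarith [e1.1, e1.2, e2.1, e2.2]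
    obtain ⟨w, hw1, hw2⟩ := cube_inter_nonempty _ _ (fun i => (hb i).1) (fun i => (hb i).2)
    exact Set.disjoint_left.mp hdisj hw1 hw2
  have hexact : ∀ i, t' i = tgt t u T K i := by
    intro i
    have hub : t' i ≤ tgt t u T K i := by
      have := (hP4 n₀ i).2
      rw [hn₀] at this
      exact this
    refine le_antisymm hub (le_of_not_gt ?_)
    intro hlt
    set g := tgt t u T K i - t' i with hg
    have hgpos : 0 < g := by rw [hg]; linarith
    obtain ⟨N, hN⟩ := exists_nat_gt (δ₀ / g)
    obtain ⟨n, hnM, hnN⟩ := hKinf.exists_gt N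
    simp only [Set.mem_setOf_eq] at hnM
    have hlow := (hP4 n i).1
    rw [hnM, hconst n hnM] at hlow
    have hsmall : δ₀ / ((n : ℝ) + 1) < g := by
      rw [div_lt_iff₀ (by positivity)]
      rw [div_lt_iff₀ hgpos] at hN
      have hNn : (N : ℝ) ≤ n := by exact_mod_cast hnN.le
      nlinarith
    rw [hg] at hsmall
    linarith
  -- properties of the exact coordinates
  have htgtb : ∀ i, u i - 1 < t' i ∧ t' i < u i + 1 := by
    intro i
    rw [hexact i]
    by_cases hiT : i ∈ T
    · have hne := (hT i).1 hiT
      have h1 := (htu i).1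
      have h2 := (htu i).2
      by_cases hiK : i ∈ K
      · by_cases hc : u i < t i
        · simp only [tgt, if_pos hiT, if_pos hiK, if_pos hc]
          constructor <;> linarith
        · have h' : t i < u i := lt_of_le_of_ne (not_lt.mp hc) hne
          simp only [tgt, if_pos hiT, if_pos hiK, if_neg hc]
          constructor <;> linarith
      · simp only [tgt, if_pos hiT, if_neg hiK]
        constructor <;> linarith
    · simp only [tgt, if_neg hiT]
      constructor <;> linarith
  have ht'S' : t' ∈ S' := by
    rw [hS']
    exact ⟨hP3 n₀, cube_inter_nonempty t' u (fun i => (htgtb i).2)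
      (fun i => by linarith [(htgtb i).1])⟩
  have ht'ne : ∀ i ∈ T, t' i ≠ u i := by
    intro i hiT
    rw [hexact i]
    have hne := (hT i).1 hiT
    have h1 := (htu i).1
    have h2 := (htu i).2
    by_cases hiK : i ∈ K
    · by_cases hc : u i < t i
      · simp only [tgt, if_pos hiT, if_pos hiK, if_pos hc]
        intro h; linarith
      · have h' : t i < u i := lt_of_le_of_ne (not_lt.mp hc) hne
        simp only [tgt, if_pos hiT, if_pos hiK, if_neg hc]
        intro h; linarith
    · simp only [tgt, if_pos hiT, if_neg hiK]
      exact hne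
  have ht'eq : ∀ i ∉ T, t' i = u i := by
    intro i hiT
    rw [hexact i]
    simp only [tgt, if_neg hiT]
  have hsuppt' : supp t' = supp t := by
    rw [hsupp, hsupp]
    apply Finset.filter_congr
    intro i _
    constructor
    · intro h
      by_contra hteq
      have hteq2 : t i = u i := hteq
      have hiT : i ∉ T := fun hi => ((hT i).1 hi) hteq2
      exact h (ht'eq i hiT)
    · intro h
      exact ht'ne i ((hT i).2 h)
  have hdiffK : ∀ i ∈ K, |t i - t' i| = 1 := by
    intro i hiK
    have hiT : i ∈ T := hKT hiK
    have hne := (hT i).1 hiT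
    rw [hexact i]
    by_cases hc : u i < t i
    · simp only [tgt, if_pos hiT, if_pos hiK, if_pos hc]
      rw [show t i - (t i - 1) = 1 by ring]
      exact abs_one
    · simp only [tgt, if_pos hiT, if_pos hiK, if_neg hc]
      rw [show t i - (t i + 1) = -1 by ring]
      rw [abs_neg]
      exact abs_one
  have hdiff0 : ∀ i ∉ K, t i - t' i = 0 := by
    intro i hiK
    rw [hexact i]
    by_cases hiT : i ∈ T
    · simp only [tgt, if_pos hiT, if_neg hiK]
      ring
    · have hteq : t i = u i := by
        by_contra hne
        exact hiT ((hT i).2 hne)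
      simp only [tgt, if_neg hiT]
      rw [hteq]
      ring
  refine ⟨t', ht'S', hsuppt', ?_, ?_⟩
  · intro i
    by_cases hiK : i ∈ K
    · have hiT : i ∈ T := hKT hiK
      rw [hexact i]
      by_cases hc : u i < t i
      · simp only [tgt, if_pos hiT, if_pos hiK, if_pos hc]
        rw [show t i - (t i - 1) = 1 by ring]
        simp
      · simp only [tgt, if_pos hiT, if_pos hiK, if_neg hc]
        rw [show t i - (t i + 1) = -1 by ring]
        simp
    · rw [hdiff0 i hiK]
      simp
  · have hfilter : Finset.univ.filter (fun i => |t i - t' i| = 1) = K := by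
      ext i
      simp only [Finset.mem_filter, Finset.mem_univ, true_and]
      constructor
      · intro habs
        by_contra hiK
        rw [hdiff0 i hiK] at habs
        norm_num at habs
      · exact hdiffK i
    rw [hfilter]
    exact hKodd
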